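/- Let L be a real symmetric positive semidefinite n×n matrix and let x ∈ ℝⁿ. Then the limit as t → ∞ of exp(−t L) · x exists and equals the orthogonal projection (with respect to the standard Euclidean inner product on ℝⁿ) of x onto the kernel of L. -/

import Mathlib

open Matrix Filter

/-- Let `L` be a real symmetric positive semidefinite `n × n` matrix and `x ∈ ℝⁿ`
(with the standard Euclidean inner product). Then `exp (-t L) x` converges as `t → ∞`
to the orthogonal projection of `x` onto the kernel of `L`. -/
theorem matrix_heat_flow_tendsto_proj_ker (n : ℕ) (L : Matrix (Fin n) (Fin n) ℝ)
    (hsymm : Lᵀ = L) (hpsd : ∀ v : Fin n → ℝ, 0 ≤ v ⬝ᵥ (L *ᵥ v))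
    (x : EuclideanSpace ℝ (Fin n)) :
    Tendsto (fun t : ℝ => Matrix.toEuclideanLin (NormedSpace.exp (-(t • L))) x)
      atTop
      (nhds ((Submodule.orthogonalProjectionOnto (LinearMap.ker (Matrix.toEuclideanLin L)) x :
        EuclideanSpace ℝ (Fin n)))) := by
  classical
  have hL : L.IsHermitian := by
    rw [Matrix.IsHermitian]
    rw [show Lᴴ = Lᵀ from Matrix.conjTranspose_eq_transpose_of_trivial L, hsymm]
  have hPSD : L.PosSemidef := Matrix.PosSemidef.of_dotProduct_mulVec_nonneg hL fun v => by simpa using hpsd v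
  set U : Matrix (Fin n) (Fin n) ℝ := (hL.eigenvectorUnitary : Matrix (Fin n) (Fin n) ℝ) with hU
  set μ : Fin n → ℝ := hL.eigenvalues with hμ
  have hspec : L = U * Matrix.diagonal μ * star U := by
    have := hL.spectral_theorem
    simpa using this
  have hsU : star U * U = 1 := Unitary.coe_star_mul_self hL.eigenvectorUnitary
  have hUs : U * star U = 1 := Unitary.coe_mul_star_self hL.eigenvectorUnitary
  have hUnit : IsUnit U := isUnit_iff_exists.mpr ⟨star U, hUs, hsU⟩
  have hUinv : U⁻¹ = star U := Matrix.inv_eq_left_inv hsU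
  -- the projection 0/1 diagonal
  set P : Matrix (Fin n) (Fin n) ℝ := Matrix.diagonal (fun i => if μ i = 0 then (1:ℝ) else 0) with hP
  set Q : Matrix (Fin n) (Fin n) ℝ := U * P * star U with hQ
  -- key exp identity
  have hexp : ∀ t : ℝ, NormedSpace.exp (-(t • L)) =
      U * Matrix.diagonal (fun i => Real.exp (-(t * μ i))) * star U := by
    intro t
    have h1 : -(t • L) = U * Matrix.diagonal (fun i => -(t * μ i)) * U⁻¹ := by
      rw [hUinv]
      rw [show (Matrix.diagonal fun i => -(t * μ i)) = -(t • Matrix.diagonal μ) by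
        rw [← Matrix.diagonal_smul, ← Matrix.diagonal_neg]; congr 1]
      rw [Matrix.mul_neg, Matrix.neg_mul, Matrix.mul_smul, Matrix.smul_mul, ← hspec]
    rw [h1, Matrix.exp_conj U (Matrix.diagonal fun i => -(t * μ i)) hUnit, Matrix.exp_diagonal, hUinv]
    congr 2
    rw [Pi.exp_def]
    funext i
    rw [← Real.exp_eq_exp_ℝ]
  -- matrix-level convergence
  have hdiag : Tendsto (fun t : ℝ => Matrix.diagonal (fun i => Real.exp (-(t * μ i))))
      atTop (nhds P) := by
    refine tendsto_pi_nhds.2 ?_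
    intro i
    rw [tendsto_pi_nhds]
    intro j
    by_cases hij : i = j
    · subst hij
      simp only [Matrix.diagonal_apply_eq, hP]
      by_cases h0 : μ i = 0
      · simp [h0]
      · have hpos : 0 < μ i := lt_of_le_of_ne (hPSD.eigenvalues_nonneg i) (Ne.symm h0)
        simp only [h0, if_false]
        have : Tendsto (fun t : ℝ => -(t * μ i)) atTop atBot := by
          apply tendsto_neg_atBot_iff.mpr
          exact Tendsto.atTop_mul_const hpos tendsto_id
        exact Real.tendsto_exp_atBot.comp this
    · simp [Matrix.diagonal_apply_ne _ hij, hP]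
  have hmat : Tendsto (fun t : ℝ => NormedSpace.exp (-(t • L))) atTop (nhds Q) := by
    simp only [hexp]
    have hc : Continuous fun D : Matrix (Fin n) (Fin n) ℝ => U * D * star U :=
      (continuous_const.matrix_mul continuous_id).matrix_mul continuous_const
    exact (hc.tendsto P).comp hdiag
  -- push through the (continuous linear) evaluation map
  have hev : Tendsto (fun t : ℝ => Matrix.toEuclideanLin (NormedSpace.exp (-(t • L))) x)
      atTop (nhds (Matrix.toEuclideanLin Q x)) := by
    have φcont : Continuous fun M : Matrix (Fin n) (Fin n) ℝ => Matrix.toEuclideanLin M x := by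
      have : (fun M : Matrix (Fin n) (Fin n) ℝ => Matrix.toEuclideanLin M x) =
          ((LinearMap.applyₗ x).comp (Matrix.toEuclideanLin (𝕜 := ℝ) (m := Fin n) (n := Fin n)).toLinearMap : Matrix (Fin n) (Fin n) ℝ →ₗ[ℝ] EuclideanSpace ℝ (Fin n)) := rfl
      rw [this]
      exact LinearMap.continuous_of_finiteDimensional _
    exact (φcont.tendsto Q).comp hmat
  -- identify the limit with the orthogonal projection
  have hstarU : star U = Uᵀ := Matrix.conjTranspose_eq_transpose_of_trivial U
  have hPP : P * P = P := by
    rw [hP, Matrix.diagonal_mul_diagonal]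
    ext i j
    rcases eq_or_ne i j with rfl | hij
    · by_cases h : μ i = 0 <;> simp [h]
    · simp [Matrix.diagonal_apply_ne _ hij]
  have hDP : Matrix.diagonal μ * P = 0 := by
    rw [hP, Matrix.diagonal_mul_diagonal]
    ext i j
    rcases eq_or_ne i j with rfl | hij
    · by_cases h : μ i = 0 <;> simp [h]
    · simp [Matrix.diagonal_apply_ne _ hij]
  have hLQ : L * Q = 0 := by
    rw [hspec, hQ]
    calc (U * Matrix.diagonal μ * star U) * (U * P * star U)
        = U * (Matrix.diagonal μ * ((star U * U) * (P * star U))) := by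
          simp only [Matrix.mul_assoc]
      _ = U * (Matrix.diagonal μ * P) * star U := by
          rw [hsU, Matrix.one_mul]; simp only [Matrix.mul_assoc]
      _ = 0 := by rw [hDP, Matrix.mul_zero, Matrix.zero_mul]
  have hQQ : Q * Q = Q := by
    rw [hQ]
    calc (U * P * star U) * (U * P * star U)
        = U * (P * ((star U * U) * (P * star U))) := by simp only [Matrix.mul_assoc]
      _ = U * (P * P) * star U := by rw [hsU, Matrix.one_mul]; simp only [Matrix.mul_assoc]
      _ = U * P * star U := by rw [hPP]
  have hQT : Qᵀ = Q := by
    rw [hQ, hstarU, Matrix.transpose_mul, Matrix.transpose_mul, Matrix.transpose_transpose,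
      Matrix.diagonal_transpose, Matrix.mul_assoc]
  have hQproj : Matrix.toEuclideanLin Q x =
      (Submodule.orthogonalProjectionOnto (LinearMap.ker (Matrix.toEuclideanLin L)) x :
        EuclideanSpace ℝ (Fin n)) := by
    symm
    apply Submodule.eq_starProjection_of_mem_of_inner_eq_zero
    · rw [LinearMap.mem_ker]
      have h1 : Matrix.toEuclideanLin L (Matrix.toEuclideanLin Q x) =
          Matrix.toEuclideanLin (L * Q) x := by
        simp [Matrix.toEuclideanLin_apply, Matrix.mulVec_mulVec]
      rw [h1, hLQ]
      simp [Matrix.toEuclideanLin_apply]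
    · intro w hw
      rw [LinearMap.mem_ker] at hw
      have hLw : L *ᵥ (WithLp.equiv 2 (Fin n → ℝ) w) = 0 := by
        have := congrArg (WithLp.equiv 2 (Fin n → ℝ)) hw
        simpa [Matrix.toEuclideanLin_apply] using this
      set w' : Fin n → ℝ := WithLp.equiv 2 (Fin n → ℝ) w with hw'
      -- Q fixes the kernel
      have hsUL : star U * L = Matrix.diagonal μ * star U := by
        rw [hspec]
        calc star U * (U * Matrix.diagonal μ * star U)
            = (star U * U) * (Matrix.diagonal μ * star U) := by simp only [Matrix.mul_assoc]
          _ = Matrix.diagonal μ * star U := by rw [hsU, Matrix.one_mul]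
      have h2 : Matrix.diagonal μ *ᵥ (star U *ᵥ w') = 0 := by
        rw [Matrix.mulVec_mulVec, ← hsUL, ← Matrix.mulVec_mulVec, hLw, Matrix.mulVec_zero]
      have hPy : P *ᵥ (star U *ᵥ w') = star U *ᵥ w' := by
        funext i
        have h3 : μ i * (star U *ᵥ w') i = 0 := by
          have := congrFun h2 i
          simpa [Matrix.mulVec_diagonal] using this
        rw [hP, Matrix.mulVec_diagonal]
        by_cases h : μ i = 0
        · simp [h]
        · have : (star U *ᵥ w') i = 0 := by
            rcases mul_eq_zero.mp h3 with h' | h'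
            · exact absurd h' h
            · exact h'
          simp [h, this]
      have hQw : Q *ᵥ w' = w' := by
        rw [hQ, ← Matrix.mulVec_mulVec, ← Matrix.mulVec_mulVec, hPy, Matrix.mulVec_mulVec,
          hUs, Matrix.one_mulVec]
      -- now the inner product
      rw [EuclideanSpace.inner_eq_star_dotProduct, dotProduct_comm]
      change dotProduct (star (WithLp.equiv 2 (Fin n → ℝ) (x - Matrix.toEuclideanLin Q x))) (WithLp.equiv 2 (Fin n → ℝ) w) = 0
      have hxq : WithLp.equiv 2 (Fin n → ℝ) (x - Matrix.toEuclideanLin Q x) =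
          WithLp.equiv 2 (Fin n → ℝ) x - Q *ᵥ (WithLp.equiv 2 (Fin n → ℝ) x) := by
        simp [Matrix.toEuclideanLin_apply]
      rw [hxq, ← hw', ← hQw, star_trivial]
      set a : Fin n → ℝ := WithLp.equiv 2 (Fin n → ℝ) x - Q *ᵥ (WithLp.equiv 2 (Fin n → ℝ) x) with ha
      have hQa : Q *ᵥ a = 0 := by
        rw [ha, Matrix.mulVec_sub, Matrix.mulVec_mulVec, hQQ, sub_self]
      calc dotProduct a (Q *ᵥ w')
          = dotProduct (a ᵥ* Q) w' := Matrix.dotProduct_mulVec a Q w'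
        _ = dotProduct (Q *ᵥ a) w' := by rw [← Matrix.mulVec_transpose, hQT]
        _ = 0 := by rw [hQa, zero_dotProduct]
  rw [← hQproj] at *
  exact hev
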